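/- arXiv:1907.03637 — 5 statements merged into one kernel-verified Lean document; each statement's English description precedes it below -/
import Mathlib

section
/- Let (R, m) be a Noetherian local ring, let f_1, …, f_r ∈ R, let J ⊆ R be an ideal, and let k = ar_J((f_1, …, f_r)) be the Artin–Rees number of (f_1, …, f_r) with respect to J. Then for every ε_1, …, ε_r ∈ J^{k+1} and every n ≥ k+1, J^{n+1} + ((f_1, …, f_r) ∩ J^n) ⊆ J^{n+1} + ((f_1+ε_1, …, f_r+ε_r) ∩ J^n). -/
open IsLocalRing

/-- An element `f` of a Noetherian local ring `R` is filter-regular if `f ∉ P` for every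
associated prime `P` of `R` other than the maximal ideal. -/
def IsFilterRegularElem {R : Type*} [CommRing R] [IsLocalRing R] (f : R) : Prop :=
  ∀ P ∈ associatedPrimes R R, P ≠ maximalIdeal R → f ∉ P

/-- The image of `f` in `R ⧸ I` is a filter-regular element: `f` avoids all associated primes of
the `R`-module `R ⧸ I` except the maximal ideal. -/
def IsFilterRegularOn {R : Type*} [CommRing R] [IsLocalRing R] (I : Ideal R) (f : R) : Prop :=
  ∀ P ∈ associatedPrimes R (R ⧸ I), P ≠ maximalIdeal R → f ∉ P

/-- `f 0, f 1, …` is a filter-regular sequence: each `f i` is filter-regular modulo the ideal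
generated by the preceding elements. -/
def IsFilterRegularSeq {R : Type*} [CommRing R] [IsLocalRing R] {r : ℕ} (f : Fin r → R) : Prop :=
  ∀ i : Fin r, IsFilterRegularOn (Ideal.span (f '' {j | j < i})) (f i)

/-- The length of an `R`-module `M`, i.e. the supremum of lengths of strictly increasing chains
of submodules of `M`. -/
noncomputable def moduleLength (R M : Type*) [Ring R] [AddCommGroup M] [Module R M] :
    WithBot ℕ∞ :=
  Order.krullDim (Submodule R M)

/-- The Artin–Rees number of `I` with respect to `J`: the least `s` with
`J ^ n ⊓ I = J ^ (n - s) * (J ^ s ⊓ I)` for all `n ≥ s`. -/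
noncomputable def arNumber {R : Type*} [CommRing R] (J I : Ideal R) : ℕ :=
  sInf {s : ℕ | ∀ n ≥ s, J ^ n ⊓ I = J ^ (n - s) * (J ^ s ⊓ I)}

open RingTheory.Sequence in
/-- The depth of a Noetherian local ring: the supremum of lengths of regular sequences contained
in the maximal ideal. -/
noncomputable def ringDepth (S : Type*) [CommRing S] [IsLocalRing S] : ℕ∞ :=
  sSup {n : ℕ∞ | ∃ l : List S,
    (∀ x ∈ l, x ∈ maximalIdeal S) ∧ IsRegular S l ∧ (l.length : ℕ∞) = n}

/-- A local ring is Cohen–Macaulay if its depth equals its Krull dimension. -/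
def IsCMLocal (S : Type*) [CommRing S] [IsLocalRing S] : Prop :=
  (ringDepth S : WithBot ℕ∞) = ringKrullDim S

/-- A (not necessarily local) ring is Cohen–Macaulay if it is Noetherian and all of its
localizations at primes are Cohen–Macaulay local rings. -/
def IsCMRing (S : Type*) [CommRing S] : Prop :=
  IsNoetherianRing S ∧ ∀ (P : Ideal S) (hP : P.IsPrime),
    letI := hP
    IsCMLocal (Localization.AtPrime P)

/-- `aIdealAt S n = ∏_{i = 0}^{dim S - 1} Ann H_n^i(S)`, the product of the annihilators of the
local cohomology modules of `S` supported at `n`, in degrees strictly below `dim S`. -/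
noncomputable def aIdealAt (S : Type u) [CommRing S] (n : Ideal S) : Ideal S :=
  ∏ i ∈ Finset.range (ENat.toNat (WithBot.unbotD 0 (ringKrullDim S))),
    Module.annihilator S ((localCohomology n i).obj (ModuleCat.of S S))

/-- The non Cohen–Macaulay locus: primes `P` such that `S_P` is not Cohen–Macaulay. -/
def NCM (S : Type*) [CommRing S] : Set (Ideal S) :=
  {P | ∃ hP : P.IsPrime, ¬ (letI := hP; IsCMLocal (Localization.AtPrime P))}

/-- The dimension of the non Cohen–Macaulay locus: `sup {dim S/P : P ∈ NCM S}`. -/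
noncomputable def dimNCM (S : Type*) [CommRing S] : WithBot ℕ∞ :=
  ⨆ P ∈ NCM S, ringKrullDim (S ⧸ P)

lemma arNumber_spec {R : Type*} [CommRing R] [IsNoetherianRing R] (J I : Ideal R) :
    ∀ n ≥ arNumber J I, J ^ n ⊓ I = J ^ (n - arNumber J I) * (J ^ arNumber J I ⊓ I) := by
  have hne : {s : ℕ | ∀ n ≥ s, J ^ n ⊓ I = J ^ (n - s) * (J ^ s ⊓ I)}.Nonempty := by
    obtain ⟨k, hk⟩ := Ideal.exists_pow_inf_eq_pow_smul J (M := R) I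
    refine ⟨k, fun n hn => ?_⟩
    simpa [smul_eq_mul, Ideal.mul_top] using hk n hn
  exact Nat.sInf_mem hne

/-- With `k = ar_J((f_1, …, f_r))`, for `ε_i ∈ J^{k+1}` and `n ≥ k+1`,
`J^{n+1} + ((f_1, …, f_r) ∩ J^n) ⊆ J^{n+1} + ((f_1+ε_1, …, f_r+ε_r) ∩ J^n)`. -/
theorem perturbed_ideal_containment
    {R : Type*} [CommRing R] [IsNoetherianRing R] [IsLocalRing R]
    {r : ℕ} (f : Fin r → R) (J : Ideal R) (ε : Fin r → R)
    (hε : ∀ i, ε i ∈ J ^ (arNumber J (Ideal.span (Set.range f)) + 1)) :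
    ∀ n : ℕ, arNumber J (Ideal.span (Set.range f)) + 1 ≤ n →
      J ^ (n + 1) + (Ideal.span (Set.range f) ⊓ J ^ n) ≤
        J ^ (n + 1) + (Ideal.span (Set.range fun i => f i + ε i) ⊓ J ^ n) := by
  intro n hn
  set k := arNumber J (Ideal.span (Set.range f)) with hk
  set I := Ideal.span (Set.range f) with hI
  set I' := Ideal.span (Set.range fun i => f i + ε i) with hI'
  refine sup_le le_sup_left ?_
  -- key: J^(n-k) * I ≤ J^(n+1) + I'
  have hkn : k ≤ n := le_trans (Nat.le_succ k) hn
  have key : J ^ (n - k) * I ≤ J ^ (n + 1) ⊔ I' := by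
    rw [Ideal.mul_le]
    intro a ha s hs
    induction hs using Submodule.span_induction with
    | mem x hx =>
        obtain ⟨i, rfl⟩ := hx
        have h1 : a * (f i + ε i) ∈ I' :=
          Ideal.mul_mem_left _ _ (Ideal.subset_span ⟨i, rfl⟩)
        have h2 : a * ε i ∈ J ^ (n + 1) := by
          have : a * ε i ∈ J ^ (n - k) * J ^ (k + 1) :=
            Ideal.mul_mem_mul ha (hε i)
          have heq : n - k + (k + 1) = n + 1 := by omega
          rwa [← pow_add, heq] at this
        have : a * f i = a * (f i + ε i) - a * ε i := by ring
        rw [this]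
        exact sub_mem (Submodule.mem_sup_right h1) (Submodule.mem_sup_left h2)
    | zero => simp
    | add x y _ _ hx hy => simpa [mul_add] using add_mem hx hy
    | smul c x _ hx =>
        simpa [smul_eq_mul, mul_left_comm] using
          Submodule.smul_mem (J ^ (n + 1) ⊔ I') c hx
  intro x hx
  have hx' : x ∈ J ^ n ⊓ I := ⟨hx.2, hx.1⟩
  rw [arNumber_spec J I n hkn] at hx'
  have hxJ : x ∈ J ^ n := hx.2
  have : x ∈ J ^ (n + 1) ⊔ I' := key (Ideal.mul_mono_right inf_le_right hx')
  obtain ⟨a, haJ, y, hyI, rfl⟩ := Submodule.mem_sup.mp this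
  refine Submodule.mem_sup.mpr ⟨a, haJ, y, ⟨hyI, ?_⟩, rfl⟩
  have haJn : a ∈ J ^ n := Ideal.pow_le_pow_right (Nat.le_succ n) haJ
  simpa using sub_mem hxJ haJn
end

section
/- Let R be a Noetherian ring, let f ∈ R, let J ⊆ R be an ideal, and let k = ar_J((f)) be the Artin–Rees number of the principal ideal (f) with respect to J. If ε ∈ J^k satisfies ε·(0 : f) = 0, then for every n ≥ k, (J^n : f) ⊆ (J^n : (f + ε)). -/
open IsLocalRing

lemma arSet_nonempty {R : Type*} [CommRing R] [IsNoetherianRing R] (J I : Ideal R) :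
    {s : ℕ | ∀ n ≥ s, J ^ n ⊓ I = J ^ (n - s) * (J ^ s ⊓ I)}.Nonempty := by
  obtain ⟨k, hk⟩ := Ideal.exists_pow_inf_eq_pow_smul J (I : Submodule R R)
  exact ⟨k, fun n hn => by simpa [smul_eq_mul, Ideal.mul_top] using hk n hn⟩

/-- With `k = ar_J((f))`, if `ε ∈ J^k` kills `(0 : f)`, then `(J^n : f) ⊆ (J^n : f + ε)`
for all `n ≥ k`. -/
theorem colon_le_colon_perturbed
    {R : Type*} [CommRing R] [IsNoetherianRing R] (f ε : R) (J : Ideal R)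
    (hε : ε ∈ J ^ arNumber J (Ideal.span {f}))
    (hann : ∀ x ∈ Submodule.colon (⊥ : Ideal R) (Ideal.span {f}), ε * x = 0) :
    ∀ n : ℕ, arNumber J (Ideal.span {f}) ≤ n →
      Submodule.colon (J ^ n) (Ideal.span {f}) ≤
        Submodule.colon (J ^ n) (Ideal.span {f + ε}) := by
  set k := arNumber J (Ideal.span {f}) with hkdef
  have hk : ∀ n ≥ k, J ^ n ⊓ Ideal.span {f} = J ^ (n - k) * (J ^ k ⊓ Ideal.span {f}) :=
    Nat.sInf_mem (arSet_nonempty J (Ideal.span {f}))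
  intro n hn x hx
  rw [Ideal.mem_colon_span_singleton] at hx
  have hxf : x * f ∈ J ^ (n - k) * (J ^ k ⊓ Ideal.span {f}) := by
    rw [← hk n hn]
    exact ⟨hx, Ideal.mem_span_singleton.mpr ⟨x, mul_comm x f⟩⟩
  -- every element of J^(n-k) * (J^k ⊓ (f)) is z * f with z * ε ∈ J^n
  have key : ∀ w ∈ J ^ (n - k) * (J ^ k ⊓ Ideal.span {f}),
      ∃ z : R, z * f = w ∧ z * ε ∈ J ^ n := by
    intro w hw
    refine Submodule.mul_induction_on hw ?_ ?_
    · intro m hm p hp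
      obtain ⟨y, hy⟩ := Ideal.mem_span_singleton.mp hp.2
      refine ⟨m * y, by rw [mul_assoc, hy]; ring, ?_⟩
      have : m * y * ε = m * (y * ε) := by ring
      rw [this]
      have h1 : y * ε ∈ J ^ k := Ideal.mul_mem_left _ _ hε
      have := Ideal.mul_mem_mul hm h1
      rwa [← pow_add, Nat.sub_add_cancel hn] at this
    · rintro a b ⟨z1, hz1, hz1'⟩ ⟨z2, hz2, hz2'⟩
      exact ⟨z1 + z2, by rw [add_mul, hz1, hz2], by rw [add_mul]; exact add_mem hz1' hz2'⟩
  obtain ⟨z, hzf, hzε⟩ := key _ hxf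
  have hxz : x - z ∈ Submodule.colon (⊥ : Ideal R) (Ideal.span {f}) := by
    rw [Ideal.mem_colon_span_singleton, sub_mul, hzf, sub_self]
    exact Submodule.zero_mem _
  have hxε : x * ε = z * ε := by
    have := hann _ hxz
    have h2 : ε * (x - z) = ε * x - ε * z := by ring
    rw [h2, sub_eq_zero] at this
    rw [mul_comm x ε, mul_comm z ε, this]
  rw [Ideal.mem_colon_span_singleton, mul_add, hxε]
  exact add_mem hx hzε
end

section
/- Let (R, m) be a Noetherian local ring and let f_1, …, f_r be a filter-regular sequence. Then the image of f_1 in R/(f_2, …, f_r) is a filter-regular element of R/(f_2, …, f_r). -/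
open IsLocalRing

section aux

variable {R : Type*} [CommRing R] [IsNoetherianRing R] [IsLocalRing R]

private lemma le_colon_iff {J K : Ideal R} {z : R} :
    K ≤ J.colon (Ideal.span {z}) ↔ z ∈ J.colon K := by
  rw [Submodule.mem_colon]
  constructor
  · intro h p hp
    simpa [smul_eq_mul, mul_comm] using Ideal.mem_colon_span_singleton.mp (h hp)
  · intro h p hp
    rw [Ideal.mem_colon_span_singleton]
    simpa [smul_eq_mul, mul_comm] using h p hp

private lemma exists_sat (I : Ideal R) :
    ∃ n : ℕ, ∀ k, n ≤ k →
      I.colon ((maximalIdeal R ^ k : Ideal R) : Set R) = I.colon ((maximalIdeal R ^ n : Ideal R) : Set R) := by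
  have mono : Monotone fun n : ℕ => I.colon ((maximalIdeal R ^ n : Ideal R) : Set R) := by
    intro a b hab z hz
    rw [Submodule.mem_colon] at hz ⊢
    exact fun p hp => hz p (Ideal.pow_le_pow_right hab hp)
  obtain ⟨n, hn⟩ := monotone_stabilizes_iff_noetherian.mpr
    (inferInstance : IsNoetherian R R) ⟨_, mono⟩
  exact ⟨n, fun k hk => (hn k hk).symm⟩

private lemma fr_sat {I : Ideal R} {g : R} (h : IsFilterRegularOn I g) :
    ∃ n : ℕ, I.colon (Ideal.span {g}) ≤ I.colon ((maximalIdeal R ^ n : Ideal R) : Set R) := by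
  obtain ⟨n, hn⟩ := exists_sat I
  refine ⟨n, ?_⟩
  by_contra hcon
  rw [SetLike.not_le_iff_exists] at hcon
  obtain ⟨x₀, hx₀C, hx₀S⟩ := hcon
  set S := I.colon ((maximalIdeal R ^ n : Ideal R) : Set R) with hSdef
  have absorb : ∀ (k : ℕ) (z : R), z ∈ S.colon ((maximalIdeal R ^ k : Ideal R) : Set R) → z ∈ S := by
    intro k z hz
    have h1 : maximalIdeal R ^ (n + k) ≤ I.colon (Ideal.span {z}) := by
      rw [pow_add, Ideal.mul_le]
      intro σ hσ τ hτ
      rw [Ideal.mem_colon_span_singleton, mul_assoc]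
      have hτz : τ * z ∈ I.colon ((maximalIdeal R ^ n : Ideal R) : Set R) := by
        have := Submodule.mem_colon.mp hz τ hτ
        rwa [smul_eq_mul, mul_comm] at this
      have := Submodule.mem_colon.mp hτz σ hσ
      rwa [smul_eq_mul, mul_comm] at this
    have h2 := le_colon_iff.mp h1
    rwa [hn (n + k) (Nat.le_add_right n k)] at h2
  obtain ⟨P, ⟨x, hxC, hxS, rfl⟩, hmax⟩ :=
    (set_has_maximal_iff_noetherian.mpr (inferInstance : IsNoetherian R R))
      {J : Ideal R | ∃ x, x ∈ I.colon (Ideal.span {g}) ∧ x ∉ S ∧ J = S.colon (Ideal.span {x})}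
      ⟨S.colon (Ideal.span {x₀}), x₀, hx₀C, hx₀S, rfl⟩
  have hIS : I ≤ S := fun z hz => Submodule.mem_colon.mpr fun p _ => by
    rw [smul_eq_mul]; exact I.mul_mem_right p hz
  have hPtop : S.colon (Ideal.span {x}) ≠ ⊤ := by
    intro hT
    exact hxS (by simpa using Ideal.mem_colon_span_singleton.mp (hT ▸ Submodule.mem_top : (1:R) ∈ _))
  have hPprime : (S.colon (Ideal.span {x})).IsPrime := by
    refine ⟨hPtop, ?_⟩
    intro u v huv
    by_contra hcon2
    push_neg at hcon2
    obtain ⟨hu, hv⟩ := hcon2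
    have huv' : u * v * x ∈ S := Ideal.mem_colon_span_singleton.mp huv
    have hvxC : v * x ∈ I.colon (Ideal.span {g}) := Ideal.mul_mem_left _ v hxC
    have hvxS : v * x ∉ S := fun hmem => hv (Ideal.mem_colon_span_singleton.mpr hmem)
    have hle : S.colon (Ideal.span {x}) ≤ S.colon (Ideal.span {v * x}) := by
      intro q hq
      rw [Ideal.mem_colon_span_singleton]
      have hqx : q * x ∈ S := Ideal.mem_colon_span_singleton.mp hq
      rw [show q * (v * x) = v * (q * x) by ring]
      exact Ideal.mul_mem_left _ v hqx
    have hne : S.colon (Ideal.span {x}) ≠ S.colon (Ideal.span {v * x}) := by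
      intro hEq
      apply hu
      rw [hEq, Ideal.mem_colon_span_singleton]
      rwa [show u * (v * x) = u * v * x by ring]
    exact hmax _ ⟨v * x, hvxC, hvxS, rfl⟩ (hle.lt_of_ne hne)
  have hPm : S.colon (Ideal.span {x}) ≠ maximalIdeal R := by
    intro hEq
    apply hxS
    apply absorb 1 x
    rw [pow_one, ← le_colon_iff, hEq]
  obtain ⟨τ, hτ, hτxS⟩ : ∃ τ ∈ maximalIdeal R ^ n, τ * x ∉ S := by
    by_contra hcon2
    push_neg at hcon2
    apply hxS
    apply absorb n x
    rw [← le_colon_iff]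
    intro τ hτ
    exact Ideal.mem_colon_span_singleton.mpr (hcon2 τ hτ)
  have hτP : τ ∉ S.colon (Ideal.span {x}) := fun hmem =>
    hτxS (Ideal.mem_colon_span_singleton.mp hmem)
  have hass : IsAssociatedPrime (S.colon (Ideal.span {x})) (R ⧸ I) := by
    refine isAssociatedPrime_iff.mpr ⟨hPprime, Ideal.Quotient.mkₐ R I (τ * x), ?_⟩
    ext q
    rw [Submodule.mem_colon_singleton, Submodule.mem_bot, ← map_smul, smul_eq_mul,
      Ideal.Quotient.mkₐ_eq_mk, Ideal.Quotient.eq_zero_iff_mem]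
    constructor
    · intro hq
      have hqx : q * x ∈ S := Ideal.mem_colon_span_singleton.mp hq
      have := Submodule.mem_colon.mp hqx τ hτ
      rw [smul_eq_mul] at this
      rwa [show q * (τ * x) = q * x * τ by ring]
    · intro hq
      have hqτ : q * τ ∈ S.colon (Ideal.span {x}) := by
        rw [Ideal.mem_colon_span_singleton, mul_assoc]
        rw [show q * (τ * x) = q * τ * x by ring] at hq
        exact hIS (by rwa [mul_assoc] at hq)
      exact (hPprime.mem_or_mem hqτ).resolve_right hτP
  have hgP : g ∈ S.colon (Ideal.span {x}) := by
    rw [Ideal.mem_colon_span_singleton]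
    have : x * g ∈ I := Ideal.mem_colon_span_singleton.mp hxC
    exact hIS (by rwa [mul_comm])
  exact h _ hass hPm hgP

end aux

section swap
variable {R : Type*} [CommRing R] [IsNoetherianRing R] [IsLocalRing R]

private lemma fr_swap {I : Ideal R} {a b : R}
    (ha : ∃ s, I.colon (Ideal.span {a}) ≤ I.colon ((maximalIdeal R ^ s : Ideal R) : Set R))
    (hb : ∃ t, (I ⊔ Ideal.span {a}).colon (Ideal.span {b})
        ≤ (I ⊔ Ideal.span {a}).colon ((maximalIdeal R ^ t : Ideal R) : Set R)) :
    ∃ u, (I ⊔ Ideal.span {b}).colon (Ideal.span {a})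
        ≤ (I ⊔ Ideal.span {b}).colon ((maximalIdeal R ^ u : Ideal R) : Set R) := by
  obtain ⟨s, hs⟩ := ha
  obtain ⟨t, ht⟩ := hb
  refine ⟨t + s, fun x hx => ?_⟩
  have hxa : x * a ∈ I ⊔ Ideal.span {b} := Ideal.mem_colon_span_singleton.mp hx
  rw [Submodule.mem_sup] at hxa
  obtain ⟨i, hi, z, hz, hiz⟩ := hxa
  obtain ⟨c, rfl⟩ := Ideal.mem_span_singleton'.mp hz
  have hcb : c ∈ (I ⊔ Ideal.span {a}).colon (Ideal.span {b}) := by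
    rw [Ideal.mem_colon_span_singleton, show c * b = -i + x * a by linear_combination hiz]
    exact Submodule.add_mem _ (Ideal.mem_sup_left (neg_mem hi))
      (Ideal.mem_sup_right (Ideal.mem_span_singleton'.mpr ⟨x, rfl⟩))
  have hc' := ht hcb
  rw [← le_colon_iff, pow_add, Ideal.mul_le]
  intro τ hτ σ hσ
  rw [Ideal.mem_colon_span_singleton]
  have hτc : c * τ ∈ I ⊔ Ideal.span {a} := by
    have := Submodule.mem_colon.mp hc' τ hτ
    rwa [smul_eq_mul] at this
  rw [Submodule.mem_sup] at hτc
  obtain ⟨i', hi', w, hw, hiw⟩ := hτc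
  obtain ⟨d, rfl⟩ := Ideal.mem_span_singleton'.mp hw
  have hkey : (τ * x - b * d) ∈ I.colon (Ideal.span {a}) := by
    rw [Ideal.mem_colon_span_singleton,
      show (τ * x - b * d) * a = τ * i + b * i' by linear_combination (-τ) * hiz + (-b) * hiw]
    exact Ideal.add_mem _ (I.mul_mem_left τ hi) (I.mul_mem_left b hi')
  have h2 := hs hkey
  have hσ2 : (τ * x - b * d) * σ ∈ I := by
    have := Submodule.mem_colon.mp h2 σ hσ
    rwa [smul_eq_mul] at this
  rw [show τ * σ * x = (τ * x - b * d) * σ + (σ * d) * b by ring]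
  exact Submodule.add_mem _ (Ideal.mem_sup_left hσ2)
    (Ideal.mem_sup_right (Ideal.mem_span_singleton'.mpr ⟨σ * d, rfl⟩))

end swap

/-- If `f_1, …, f_r` is a filter-regular sequence, then the image of `f_1` in
`R/(f_2, …, f_r)` is a filter-regular element. -/
theorem head_filter_regular_mod_tail
    {R : Type*} [CommRing R] [IsNoetherianRing R] [IsLocalRing R]
    {r : ℕ} (f : Fin (r + 1) → R) (hf : IsFilterRegularSeq f) :
    IsFilterRegularOn (Ideal.span (f '' {j | j ≠ 0})) (f 0) := by
  have main : ∀ k : ℕ, k ≤ r →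
      ∃ u, (Ideal.span (f '' {j | j ≠ 0 ∧ (j : ℕ) ≤ k})).colon (Ideal.span {f 0})
        ≤ (Ideal.span (f '' {j | j ≠ 0 ∧ (j : ℕ) ≤ k})).colon ((maximalIdeal R ^ u : Ideal R) : Set R) := by
    intro k
    induction k with
    | zero =>
      intro _
      have h0 := fr_sat (hf 0)
      have hset0 : {j : Fin (r+1) | j < 0} = {j : Fin (r+1) | j ≠ 0 ∧ (j : ℕ) ≤ 0} := by
        ext j
        simp only [Set.mem_setOf_eq, Set.mem_insert_iff, Fin.lt_def, Fin.ext_iff, Fin.val_zero, Fin.coe_ofNat_eq_mod, Nat.zero_mod]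
        have h00 : ((0 : Fin (r+1)) : ℕ) = 0 := rfl
        omega
      rwa [hset0] at h0
    | succ k ih =>
      intro hk
      have IH := ih (Nat.le_of_succ_le hk)
      have hjk : (k + 1) < r + 1 := by omega
      have hhyp := fr_sat (hf ⟨k+1, hjk⟩)
      have hset1 : {j : Fin (r+1) | j < (⟨k+1, hjk⟩ : Fin (r+1))}
          = insert (0 : Fin (r+1)) {j : Fin (r+1) | j ≠ 0 ∧ (j : ℕ) ≤ k} := by
        ext j
        simp only [Set.mem_setOf_eq, Set.mem_insert_iff, Fin.lt_def, Fin.ext_iff, Fin.val_zero, Fin.coe_ofNat_eq_mod, Nat.zero_mod]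
        have h00 : ((0 : Fin (r+1)) : ℕ) = 0 := rfl
        omega
      have hset2 : {j : Fin (r+1) | j ≠ 0 ∧ (j : ℕ) ≤ k + 1}
          = insert (⟨k+1, hjk⟩ : Fin (r+1)) {j : Fin (r+1) | j ≠ 0 ∧ (j : ℕ) ≤ k} := by
        ext j
        simp only [Set.mem_setOf_eq, Set.mem_insert_iff, Fin.lt_def, Fin.ext_iff, Fin.val_zero, Fin.coe_ofNat_eq_mod, Nat.zero_mod]
        have h00 : ((0 : Fin (r+1)) : ℕ) = 0 := rfl
        omega
      rw [hset1, Set.image_insert_eq, Ideal.span_insert, sup_comm] at hhyp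
      have hres := fr_swap IH hhyp
      rw [hset2, Set.image_insert_eq, Ideal.span_insert, sup_comm]
      exact hres
  obtain ⟨u, hu⟩ := main r le_rfl
  have hEq3 : {j : Fin (r+1) | j ≠ 0} = {j : Fin (r+1) | j ≠ 0 ∧ (j : ℕ) ≤ r} := by
    ext j
    simp only [Set.mem_setOf_eq]
    exact ⟨fun h => ⟨h, Nat.lt_succ_iff.mp j.isLt⟩, fun h => h.1⟩
  rw [hEq3]
  intro P hP hPm hfP
  obtain ⟨hPrime, y, hy⟩ := isAssociatedPrime_iff.mp hP
  obtain ⟨z, rfl⟩ := Ideal.Quotient.mkₐ_surjective R _ y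
  have hz : z ∈ (Ideal.span (f '' {j | j ≠ 0 ∧ (j : ℕ) ≤ r})).colon (Ideal.span {f 0}) := by
    rw [Ideal.mem_colon_span_singleton]
    have h1 := hy ▸ hfP
    rw [Submodule.mem_colon_singleton, Submodule.mem_bot, ← map_smul, smul_eq_mul,
      Ideal.Quotient.mkₐ_eq_mk, Ideal.Quotient.eq_zero_iff_mem] at h1
    rwa [mul_comm]
  have hmP : maximalIdeal R ^ u ≤ P := by
    intro μ hμ
    rw [hy, Submodule.mem_colon_singleton, Submodule.mem_bot, ← map_smul, smul_eq_mul,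
      Ideal.Quotient.mkₐ_eq_mk, Ideal.Quotient.eq_zero_iff_mem]
    have := Submodule.mem_colon.mp (hu hz) μ hμ
    rwa [smul_eq_mul, mul_comm] at this
  have hle : maximalIdeal R ≤ P := fun w hw =>
    hPrime.mem_of_pow_mem u (hmP (Ideal.pow_mem_pow hw u))
  exact hPm (le_antisymm (le_maximalIdeal hPrime.ne_top) hle)
end

section
/- Let (R, m) be a Noetherian local ring and suppose f_1, …, f_r ∈ R is an improper regular sequence, i.e., for each 0 ≤ i < r, f_{i+1} is a nonzerodivisor on R/(f_1, …, f_i). Then f_1 is a nonzerodivisor on R/(f_2, …, f_r). -/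
open IsLocalRing

lemma aux_ofList_take {R : Type*} [CommRing R] {n : ℕ} (f : Fin n → R) (i : ℕ) (h : i ≤ n) :
    Ideal.ofList ((List.ofFn f).take i) = Ideal.span (f '' {j | (j : ℕ) < i}) := by
  rw [← Fin.ofFn_take_eq_take_ofFn h f]
  refine congrArg Ideal.span ?_
  ext x
  simp only [Set.mem_setOf_eq, List.mem_ofFn, Fin.take, Set.mem_range, Set.mem_image]
  constructor
  · rintro ⟨j, rfl⟩; exact ⟨Fin.castLE h j, j.isLt, rfl⟩
  · rintro ⟨j, hj, rfl⟩; exact ⟨⟨j, hj⟩, rfl⟩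

lemma aux_smul_top {R : Type*} [CommRing R] (I : Ideal R) :
    (I • ⊤ : Submodule R R) = I := by
  rw [smul_eq_mul, Ideal.mul_top]

/-- If `f_1, …, f_r` is an improper regular sequence on a Noetherian local ring, then `f_1` is a
nonzerodivisor on `R/(f_2, …, f_r)`. -/
theorem head_regular_mod_tail_of_improper_regular
    {R : Type*} [CommRing R] [IsNoetherianRing R] [IsLocalRing R]
    {r : ℕ} (f : Fin (r + 1) → R)
    (hf : ∀ i, IsSMulRegular (R ⧸ Ideal.span (f '' {j | j < i})) (f i)) :
    IsSMulRegular (R ⧸ Ideal.span (f '' {j | j ≠ 0})) (f 0) := by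
  by_cases hu : ∀ i, f i ∈ IsLocalRing.maximalIdeal R
  · have hw : RingTheory.Sequence.IsWeaklyRegular R (List.ofFn f) := by
      rw [RingTheory.Sequence.isWeaklyRegular_iff]
      intro i hi
      rw [List.length_ofFn] at hi
      have e : (R ⧸ (Ideal.ofList ((List.ofFn f).take i) • ⊤ : Submodule R R)) ≃ₗ[R]
          R ⧸ Ideal.span (f '' {j | j < (⟨i, hi⟩ : Fin (r + 1))}) :=
        Submodule.quotEquivOfEq _ _ (by
          rw [aux_smul_top, aux_ofList_take f i (le_of_lt hi)]
          refine congrArg (Ideal.span <| f '' ·) ?_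
          ext j; simp [Fin.lt_def])
      have h2 := (e.isSMulRegular_congr (f ⟨i, hi⟩)).mpr (hf ⟨i, hi⟩)
      simp only [List.getElem_ofFn]
      exact h2
    have hperm : (List.ofFn f).Perm
        (List.ofFn (fun j : Fin r => f j.succ) ++ [f 0]) := by
      rw [List.ofFn_succ]
      exact (List.perm_append_singleton _ _).symm
    have hw2 := IsLocalRing.isWeaklyRegular_of_perm_of_subset_maximalIdeal hw hperm
      (fun x hx => by
        rw [List.mem_ofFn] at hx
        obtain ⟨j, rfl⟩ := hx
        exact hu j)
    rw [RingTheory.Sequence.isWeaklyRegular_append_iff] at hw2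
    obtain ⟨-, hw3⟩ := hw2
    rw [RingTheory.Sequence.isWeaklyRegular_singleton_iff] at hw3
    have e : (R ⧸ (Ideal.ofList (List.ofFn fun j : Fin r => f j.succ) • ⊤ : Submodule R R)) ≃ₗ[R]
        R ⧸ Ideal.span (f '' {j | j ≠ 0}) :=
      Submodule.quotEquivOfEq _ _ (by
        rw [aux_smul_top]
        refine congrArg Ideal.span ?_
        ext x
        simp only [Set.mem_setOf_eq, List.mem_ofFn, Set.mem_image, Set.mem_range]
        constructor
        · rintro ⟨j, rfl⟩; exact ⟨j.succ, Fin.succ_ne_zero j, rfl⟩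
        · rintro ⟨j, hj, rfl⟩; exact ⟨j.pred hj, by simp⟩)
    exact (e.isSMulRegular_congr (f 0)).mp hw3
  · push_neg at hu
    obtain ⟨j, hj⟩ := hu
    have hju : IsUnit (f j) := by
      rwa [IsLocalRing.mem_maximalIdeal, mem_nonunits_iff, not_not] at hj
    rcases eq_or_ne j 0 with rfl | hj0
    · exact hju.isSMulRegular _
    · have htop : Ideal.span (f '' {j | j ≠ 0}) = ⊤ :=
        Ideal.eq_top_of_isUnit_mem _ (Ideal.subset_span ⟨j, hj0, rfl⟩) hju
      have : Subsingleton (R ⧸ Ideal.span (f '' {j | j ≠ 0})) := by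
        rw [Ideal.Quotient.subsingleton_iff]; exact htop
      intro a b _
      exact Subsingleton.elim a b
end

section
/- Let (R, m) be a Noetherian local ring and let I ⊆ R be an m-primary ideal. Then there exist elements f_1, …, f_r generating I that form a filter-regular sequence. -/
open IsLocalRing

set_option linter.unusedSectionVars false

section MyAux

variable {R : Type*} [CommRing R] {M : Type*} [AddCommGroup M] [Module R M]

lemma my_ker_tss (x : M) :
    LinearMap.ker (LinearMap.toSpanSingleton R M x) = (R ∙ x).annihilator := by
  ext r
  simp [LinearMap.mem_ker, Submodule.mem_annihilator_span_singleton,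
    LinearMap.toSpanSingleton_apply]

lemma my_ass_subset_union [IsNoetherianRing R] (N : Submodule R M) :
    associatedPrimes R M ⊆ associatedPrimes R N ∪ associatedPrimes R (M ⧸ N) := by
  intro P hP'
  obtain ⟨hP, x, hx⟩ := isAssociatedPrime_iff.1 hP'
  rw [Submodule.bot_colon'] at hx
  have hmem : ∀ b : R, b ∈ P ↔ b • x = 0 := fun b => by
    rw [hx, Submodule.mem_annihilator_span_singleton]
  by_cases h : ∃ a : R, a • x ∈ N ∧ a • x ≠ 0
  · obtain ⟨a, haN, ha0⟩ := h
    left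
    have ha : a ∉ P := fun haP => ha0 ((hmem a).1 haP)
    refine isAssociatedPrime_iff.2 ⟨hP, ⟨a • x, haN⟩, ?_⟩
    rw [Submodule.bot_colon']
    ext b
    rw [Submodule.mem_annihilator_span_singleton]
    have heq : (b • (⟨a • x, haN⟩ : N) = 0) ↔ (b * a) • x = 0 := by
      rw [Subtype.ext_iff]; simp [mul_smul]
    rw [heq, ← hmem (b * a)]
    constructor
    · exact fun hb => P.mul_mem_right a hb
    · intro hba
      rcases hP.mem_or_mem hba with hb | hA
      · exact hb
      · exact absurd hA ha
  · right
    push_neg at h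
    refine isAssociatedPrime_iff.2 ⟨hP, N.mkQ x, ?_⟩
    rw [Submodule.bot_colon']
    ext b
    rw [Submodule.mem_annihilator_span_singleton, ← map_smul, Submodule.mkQ_apply,
      Submodule.Quotient.mk_eq_zero, hmem b]
    exact ⟨fun hb => hb ▸ N.zero_mem, fun hb => h b hb⟩

lemma my_ass_quot_prime [IsNoetherianRing R] {p : Ideal R} (hp : p.IsPrime) :
    associatedPrimes R (R ⧸ p) ⊆ {p} := by
  intro P hP'
  obtain ⟨hP, x, hx⟩ := isAssociatedPrime_iff.1 hP'
  rw [Submodule.bot_colon'] at hx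
  obtain ⟨a, rfl⟩ := Ideal.Quotient.mk_surjective x
  have ha : (Ideal.Quotient.mk p a : R ⧸ p) ≠ 0 := by
    intro h0
    apply hP.ne_top
    rw [hx, Submodule.annihilator_eq_top_iff, Submodule.span_singleton_eq_bot]
    exact h0
  have haa : a ∉ p := by rwa [Ne, Ideal.Quotient.eq_zero_iff_mem] at ha
  show P = p
  ext b
  rw [hx, Submodule.mem_annihilator_span_singleton]
  rw [show b • (Ideal.Quotient.mk p a : R ⧸ p) = Ideal.Quotient.mk p (b * a) by
    show b • Submodule.Quotient.mk a = Submodule.Quotient.mk (b * a)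
    rw [← Submodule.Quotient.mk_smul, smul_eq_mul]]
  rw [Ideal.Quotient.eq_zero_iff_mem]
  constructor
  · intro hba
    rcases hp.mem_or_mem hba with hb | hA
    · exact hb
    · exact absurd hA haa
  · exact fun hb => p.mul_mem_right a hb

lemma my_ass_span_singleton [IsNoetherianRing R] {x : M} (hp : ((R ∙ x).annihilator).IsPrime) :
    associatedPrimes R (R ∙ x : Submodule R M) ⊆ {(R ∙ x).annihilator} := by
  have e : (R ⧸ ((R ∙ x).annihilator : Ideal R)) ≃ₗ[R] (R ∙ x : Submodule R M) :=
    (Submodule.quotEquivOfEq _ _ (my_ker_tss x).symm).trans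
      ((LinearMap.toSpanSingleton R M x).quotKerEquivRange.trans
        (LinearEquiv.ofEq _ _ (LinearMap.span_singleton_eq_range R M x).symm))
  rw [← LinearEquiv.AssociatedPrimes.eq e]
  exact my_ass_quot_prime hp

lemma my_ass_finite [IsNoetherianRing R] (J : Ideal R) :
    (associatedPrimes R (R ⧸ J)).Finite := by
  haveI : IsNoetherian R R := isNoetherianRing_iff.mp ‹_›
  induction J using IsNoetherian.induction with
  | _ J ih =>
  by_cases h : associatedPrimes R (R ⧸ J) = ∅
  · simp [h]
  obtain ⟨p, hp⟩ := Set.nonempty_iff_ne_empty.2 h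
  obtain ⟨hprime, x, hx⟩ := isAssociatedPrime_iff.1 hp
  rw [Submodule.bot_colon'] at hx
  obtain ⟨a, rfl⟩ := Submodule.Quotient.mk_surjective J x
  have hx0 : (Submodule.Quotient.mk a : R ⧸ J) ≠ 0 := by
    intro h0
    apply hprime.ne_top
    rw [hx, Submodule.annihilator_eq_top_iff, Submodule.span_singleton_eq_bot]
    exact h0
  have haJ : a ∉ J := by rwa [Ne, Submodule.Quotient.mk_eq_zero] at hx0
  set J' : Ideal R := J ⊔ Ideal.span {a} with hJ'
  have hlt : J < J' :=
    lt_of_le_of_ne le_sup_left (fun hEq => haJ (hEq ▸ Submodule.mem_sup_right (Ideal.subset_span rfl)))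
  have hmap : Submodule.map J.mkQ J' = (R ∙ (Submodule.Quotient.mk a : R ⧸ J)) := by
    rw [hJ', Submodule.map_sup, ← Ideal.submodule_span_eq, Submodule.map_span, Set.image_singleton]
    rw [Submodule.mkQ_map_self, bot_sup_eq, Submodule.mkQ_apply]
  have key : associatedPrimes R (R ⧸ J) ⊆
      insert p (associatedPrimes R (R ⧸ J')) := by
    intro P hP
    rcases my_ass_subset_union (R ∙ (Submodule.Quotient.mk a : R ⧸ J)) hP with h1 | h2
    · left
      have := my_ass_span_singleton (hx ▸ hprime) h1
      rw [Set.mem_singleton_iff] at this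
      rw [this, ← hx]
    · right
      have e : ((R ⧸ J) ⧸ (R ∙ (Submodule.Quotient.mk a : R ⧸ J))) ≃ₗ[R] R ⧸ J' :=
        (Submodule.quotEquivOfEq _ _ hmap.symm).trans
          (Submodule.quotientQuotientEquivQuotient J J' le_sup_left)
      rwa [← LinearEquiv.AssociatedPrimes.eq e]
  exact ((ih J' hlt).insert p).subset key

end MyAux

section
variable {R : Type*} [CommRing R] [IsNoetherianRing R] [IsLocalRing R]

lemma my_avoid (I J : Ideal R) (hI : ∃ n : ℕ, maximalIdeal R ^ n ≤ I) (hJI : J < I) :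
    ∃ g ∈ I, g ∉ J ∧ IsFilterRegularOn J g := by
  classical
  have hSfin : {P ∈ associatedPrimes R (R ⧸ J) | P ≠ maximalIdeal R}.Finite :=
    (my_ass_finite J).subset (fun P hP => hP.1)
  set T : Finset (Ideal R) := insert J hSfin.toFinset with hT
  have hprime : ∀ P ∈ T, P ≠ J → P ≠ J → P.IsPrime := by
    intro P hP hPJ _
    rcases Finset.mem_insert.mp hP with rfl | hP
    · exact absurd rfl hPJ
    · exact (hSfin.mem_toFinset.mp hP).1.isPrime
  have hnot : ¬ ((I : Set R) ⊆ ⋃ P ∈ (T : Set (Ideal R)), (P : Set R)) := by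
    intro hsub
    rw [Ideal.subset_union_prime J J hprime] at hsub
    obtain ⟨P, hPT, hle⟩ := hsub
    rcases Finset.mem_insert.mp hPT with rfl | hP
    · exact hJI.not_ge hle
    · obtain ⟨hPass, hPm⟩ := hSfin.mem_toFinset.mp hP
      haveI hPprime : P.IsPrime := hPass.isPrime
      obtain ⟨n, hn⟩ := hI
      have hmP : maximalIdeal R ≤ P := Ideal.IsPrime.le_of_pow_le (hn.trans hle)
      exact hPm ((maximalIdeal.isMaximal R).eq_of_le hPprime.ne_top hmP).symm
  obtain ⟨g, hgI, hg⟩ := Set.not_subset.mp hnot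
  have hgmem : ∀ P ∈ T, g ∉ (P : Set R) := by
    intro P hP hgP
    exact hg (Set.mem_biUnion hP hgP)
  refine ⟨g, hgI, hgmem J (Finset.mem_insert_self _ _), ?_⟩
  intro P hPass hPm hgP
  exact hgmem P (Finset.mem_insert_of_mem (hSfin.mem_toFinset.mpr ⟨hPass, hPm⟩)) hgP

lemma my_cons_image_zero {r : ℕ} (g : R) (f : Fin r → R) :
    (Fin.cons g f : Fin (r + 1) → R) '' {j | j < (0 : Fin (r + 1))} = ∅ := by
  have : {j : Fin (r + 1) | j < 0} = ∅ := by
    ext j; simp [Fin.not_lt_zero]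
  rw [this, Set.image_empty]

lemma my_cons_image_succ {r : ℕ} (g : R) (f : Fin r → R) (i : Fin r) :
    (Fin.cons g f : Fin (r + 1) → R) '' {j | j < i.succ} = insert g (f '' {j | j < i}) := by
  ext y
  simp only [Set.mem_image, Set.mem_insert_iff, Set.mem_setOf_eq]
  constructor
  · rintro ⟨j, hj, rfl⟩
    rcases Fin.eq_zero_or_eq_succ j with rfl | ⟨j', rfl⟩
    · left; simp
    · right; exact ⟨j', Fin.succ_lt_succ_iff.mp hj, by simp⟩
  · rintro (rfl | ⟨j', hj', rfl⟩)
    · exact ⟨0, Fin.succ_pos i, by simp⟩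
    · exact ⟨j'.succ, Fin.succ_lt_succ_iff.mpr hj', by simp⟩

lemma my_range_cons {r : ℕ} (g : R) (f : Fin r → R) :
    Set.range (Fin.cons g f : Fin (r + 1) → R) = insert g (Set.range f) := by
  ext y
  simp only [Set.mem_range, Set.mem_insert_iff]
  constructor
  · rintro ⟨j, rfl⟩
    rcases Fin.eq_zero_or_eq_succ j with rfl | ⟨j', rfl⟩
    · left; simp
    · right; exact ⟨j', by simp⟩
  · rintro (rfl | ⟨j', rfl⟩)
    · exact ⟨0, by simp⟩
    · exact ⟨j'.succ, by simp⟩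

lemma my_main (I : Ideal R) (hI : ∃ n : ℕ, maximalIdeal R ^ n ≤ I) :
    ∀ J : Ideal R, J ≤ I → ∃ (r : ℕ) (f : Fin r → R),
      (∀ i : Fin r, IsFilterRegularOn (J ⊔ Ideal.span (f '' {j | j < i})) (f i)) ∧
      J ⊔ Ideal.span (Set.range f) = I := by
  haveI : IsNoetherian R R := isNoetherianRing_iff.mp ‹_›
  intro J
  induction J using IsNoetherian.induction with
  | _ J ih =>
  intro hJI
  rcases eq_or_lt_of_le hJI with rfl | hlt
  · refine ⟨0, Fin.elim0, fun i => i.elim0, ?_⟩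
    rw [Set.range_eq_empty, Ideal.span_empty, sup_bot_eq]
  · obtain ⟨g, hgI, hgJ, hgfr⟩ := my_avoid I J hI hlt
    set J' : Ideal R := J ⊔ Ideal.span {g} with hJ'
    have hlt' : J < J' :=
      lt_of_le_of_ne le_sup_left
        (fun hEq => hgJ (hEq ▸ Submodule.mem_sup_right (Ideal.subset_span rfl)))
    have hJ'I : J' ≤ I := sup_le hJI ((Ideal.span_singleton_le_iff_mem I).mpr hgI)
    obtain ⟨r, f, h1, h2⟩ := ih J' hlt' hJ'I
    refine ⟨r + 1, Fin.cons g f, ?_, ?_⟩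
    · intro i
      induction i using Fin.cases with
      | zero =>
        rw [Fin.cons_zero, my_cons_image_zero, Ideal.span_empty, sup_bot_eq]
        exact hgfr
      | succ i' =>
        rw [Fin.cons_succ, my_cons_image_succ, Ideal.span_insert, ← sup_assoc, ← hJ']
        exact h1 i'
    · rw [my_range_cons, Ideal.span_insert, ← sup_assoc, ← hJ']
      exact h2

end

/-- Every `m`-primary ideal of a Noetherian local ring is generated by a filter-regular
sequence. -/
theorem exists_filter_regular_generators_of_primary
    {R : Type*} [CommRing R] [IsNoetherianRing R] [IsLocalRing R]
    (I : Ideal R) (hI : ∃ n : ℕ, maximalIdeal R ^ n ≤ I) :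
    ∃ (r : ℕ) (f : Fin r → R), Ideal.span (Set.range f) = I ∧ IsFilterRegularSeq f := by
  obtain ⟨r, f, h1, h2⟩ := my_main I hI ⊥ bot_le
  refine ⟨r, f, by simpa using h2, fun i => ?_⟩
  have := h1 i
  rwa [bot_sup_eq] at this
end
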